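/- arXiv:math/0206260 — 2 statements merged into one kernel-verified Lean document; each statement's English description precedes it below -/
import Mathlib

section
/- If x, y ∈ ℝ² and |x−y| = (2√2/3)^k · (√3)^l for some non-negative integers k, l, then there exists a finite set S with {x,y} ⊆ S ⊆ ℝ² such that every unit-distance preserving map f : S → ℂ² satisfies φ(f(x), f(y)) = |x−y|². -/
/-- `φ(p,q) = (p₁−q₁)² + (p₂−q₂)²` for `p, q ∈ ℂ²`. -/
noncomputable def phi2 (p q : Fin 2 → ℂ) : ℂ := (p 0 - q 0) ^ 2 + (p 1 - q 1) ^ 2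

lemma phi2_comm (p q : Fin 2 → ℂ) : phi2 p q = phi2 q p := by unfold phi2; ring

lemma perp_decomp (z0 z1 u0 u1 S : ℂ) (hS : S ≠ 0) (hu : u0^2+u1^2 = S)
    (hperp : z0*u0 + z1*u1 = 0) : ∃ lam : ℂ, z0 = -(lam*u1) ∧ z1 = lam*u0 := by
  refine ⟨(z1*u0 - z0*u1)/S, ?_, ?_⟩
  · field_simp
    linear_combination u0*hperp - z0*hu
  · field_simp
    linear_combination u1*hperp - z1*hu

lemma cross_zero (z0 z1 u0 u1 v0 v1 : ℂ) (hcross : u0*v1 - u1*v0 ≠ 0)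
    (h1 : z0*u0+z1*u1 = 0) (h2 : z0*v0+z1*v1 = 0) : z0 = 0 ∧ z1 = 0 := by
  constructor
  · have h : z0 * (u0*v1 - u1*v0) = 0 := by linear_combination v1*h1 - u1*h2
    rcases mul_eq_zero.1 h with h | h
    · exact h
    · exact absurd h hcross
  · have h : z1 * (u0*v1 - u1*v0) = 0 := by linear_combination -v0*h1 + u0*h2
    rcases mul_eq_zero.1 h with h | h
    · exact h
    · exact absurd h hcross

/-- Kite dichotomy over ℂ². -/
lemma kiteC (A B C D : Fin 2 → ℂ) (S T1 T2 : ℂ) (hS : S ≠ 0)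
    (hAB : phi2 A B = S) (hCA : phi2 C A = T1) (hCB : phi2 C B = T2)
    (hDA : phi2 D A = T1) (hDB : phi2 D B = T2) :
    C = D ∨ phi2 C D = 4*T1 - (T1 - T2 + S)^2 / S := by
  unfold phi2 at *
  set a0 := A 0; set a1 := A 1; set b0 := B 0; set b1 := B 1
  set c0 := C 0; set c1 := C 1; set d0 := D 0; set d1 := D 1
  set u0 := a0 - b0 with hu0
  set u1 := a1 - b1 with hu1
  have hu : u0^2 + u1^2 = S := by linear_combination hAB
  set K := T1 - T2 + S with hK
  set zc0 := 2*S*(c0 - a0) + K*u0 with hzc0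
  set zc1 := 2*S*(c1 - a1) + K*u1 with hzc1
  set zd0 := 2*S*(d0 - a0) + K*u0 with hzd0
  set zd1 := 2*S*(d1 - a1) + K*u1 with hzd1
  have hperpC : zc0*u0 + zc1*u1 = 0 := by
    simp only [hzc0, hzc1, hK, hu0, hu1]
    linear_combination S*hCB - S*hCA + (T1-T2)*hAB
  have hperpD : zd0*u0 + zd1*u1 = 0 := by
    simp only [hzd0, hzd1, hK, hu0, hu1]
    linear_combination S*hDB - S*hDA + (T1-T2)*hAB
  have hQC : zc0^2 + zc1^2 = 4*S^2*T1 - S*K^2 := by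
    simp only [hzc0, hzc1, hK, hu0, hu1]
    linear_combination (4*S^2 - 2*S*(T1-T2+S))*hCA + (2*S*(T1-T2+S))*hCB +
      ((T1-T2+S)^2 - 2*S*(T1-T2+S))*hAB
  have hQD : zd0^2 + zd1^2 = 4*S^2*T1 - S*K^2 := by
    simp only [hzd0, hzd1, hK, hu0, hu1]
    linear_combination (4*S^2 - 2*S*(T1-T2+S))*hDA + (2*S*(T1-T2+S))*hDB +
      ((T1-T2+S)^2 - 2*S*(T1-T2+S))*hAB
  obtain ⟨lam, hl0, hl1⟩ := perp_decomp zc0 zc1 u0 u1 S hS hu hperpC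
  obtain ⟨nu, hn0, hn1⟩ := perp_decomp zd0 zd1 u0 u1 S hS hu hperpD
  have hlam : lam^2 * S = 4*S^2*T1 - S*K^2 := by
    rw [hl0, hl1] at hQC; linear_combination hQC - lam^2*hu
  have hnu : nu^2 * S = 4*S^2*T1 - S*K^2 := by
    rw [hn0, hn1] at hQD; linear_combination hQD - nu^2*hu
  have hsq : (lam - nu) * (lam + nu) = 0 := by
    have h2 : (lam^2 - nu^2) * S = 0 := by linear_combination hlam - hnu
    rcases mul_eq_zero.1 h2 with h | h
    · linear_combination h
    · exact absurd h hS
  have h2S : (2*S : ℂ) ≠ 0 := by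
    simp [hS]
  rcases mul_eq_zero.1 hsq with h | h
  · -- lam = nu : C = D
    left
    have e0 : 2*S*(c0 - d0) = 0 := by linear_combination hl0 - hn0 - u1*h
    have e1 : 2*S*(c1 - d1) = 0 := by linear_combination hl1 - hn1 + u0*h
    have e0' : c0 = d0 := by
      rcases mul_eq_zero.1 e0 with h' | h'
      · exact absurd h' h2S
      · exact sub_eq_zero.1 h'
    have e1' : c1 = d1 := by
      rcases mul_eq_zero.1 e1 with h' | h'
      · exact absurd h' h2S
      · exact sub_eq_zero.1 h'
    funext i
    fin_cases i
    · exact e0'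
    · exact e1'
  · -- lam = -nu
    right
    have E0 : 2*S*(c0-d0) = 2*nu*u1 := by linear_combination hl0 - hn0 - u1*h
    have E1 : 2*S*(c1-d1) = -(2*nu*u0) := by linear_combination hl1 - hn1 + u0*h
    have h4S : (4*S : ℂ) ≠ 0 := by simp [hS]
    have G4 : (((c0-d0)^2+(c1-d1)^2) * S) * (4*S) = (4*T1*S - K^2)*(4*S) := by
      linear_combination (2*S*(c0-d0) + 2*nu*u1)*E0 + (2*S*(c1-d1) - 2*nu*u0)*E1
        + 4*nu^2*hu + 4*hnu
    have Gpoly := mul_right_cancel₀ h4S G4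
    field_simp
    linear_combination Gpoly

/-- Trilateration on the doubling configuration over ℂ². -/
lemma triC (P Q R W Y : Fin 2 → ℂ) (m : ℂ) (hm : m ≠ 0)
    (hPQ : phi2 P Q = m) (hPR : phi2 P R = m) (hQR : phi2 Q R = m)
    (hQW : phi2 Q W = m) (hRW : phi2 R W = m) (hPW : phi2 P W = 3*m)
    (hQY : phi2 Q Y = m) (hRY : phi2 R Y = 3*m) (hWY : phi2 W Y = m) :
    phi2 P Y = 4*m := by
  unfold phi2 at *
  set p0 := P 0; set p1 := P 1; set q0 := Q 0; set q1 := Q 1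
  set r0 := R 0; set r1 := R 1; set w0 := W 0; set w1 := W 1
  set y0 := Y 0; set y1 := Y 1
  set u0 := q0 - p0 with hdu0
  set u1 := q1 - p1 with hdu1
  set v0 := r0 - p0 with hdv0
  set v1 := r1 - p1 with hdv1
  have hB : u0*v0 + u1*v1 = m/2 := by
    simp only [hdu0, hdu1, hdv0, hdv1]
    linear_combination (hPQ + hPR - hQR)/2
  have hc2 : (u0*v1 - u1*v0)^2 = 3/4*m^2 := by
    simp only [hdu0, hdu1, hdv0, hdv1]
    linear_combination ((r0-p0)^2+(r1-p1)^2)*hPQ + m*hPR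
      - ((q0-p0)*(r0-p0)+(q1-p1)*(r1-p1)+m/2)*((hPQ + hPR - hQR)/2)
  have hcross : u0*v1 - u1*v0 ≠ 0 := by
    intro h0
    rw [h0] at hc2
    have : m^2 = 0 := by linear_combination -4/3*hc2
    exact hm (pow_eq_zero_iff (n := 2) (by norm_num) |>.1 this)
  have hBWu : (w0-p0)*u0 + (w1-p1)*u1 = 3/2*m := by
    simp only [hdu0, hdu1]
    linear_combination (hPQ + hPW - hQW)/2
  have hBWv : (w0-p0)*v0 + (w1-p1)*v1 = 3/2*m := by
    simp only [hdv0, hdv1]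
    linear_combination (hPR + hPW - hRW)/2
  have h1 : (w0-p0-u0-v0)*u0 + (w1-p1-u1-v1)*u1 = 0 := by
    linear_combination hBWu - hPQ - hB
  have h2 : (w0-p0-u0-v0)*v0 + (w1-p1-u1-v1)*v1 = 0 := by
    linear_combination hBWv - hB - hPR
  obtain ⟨hz0, hz1⟩ := cross_zero _ _ _ _ _ _ hcross h1 h2
  have hw0 : w0 = q0 + r0 - p0 := by
    simp only [hdu0, hdv0] at hz0; linear_combination hz0
  have hw1 : w1 = q1 + r1 - p1 := by
    simp only [hdu1, hdv1] at hz1; linear_combination hz1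
  linear_combination -hWY + hQY + hRY + hPQ + hPR - hQR
    + (w0 + q0 + r0 - p0 - 2*y0)*hw0 + (w1 + q1 + r1 - p1 - 2*y1)*hw1

abbrev E2 := EuclideanSpace ℝ (Fin 2)

noncomputable def mk2 (a b : ℝ) : E2 := (WithLp.equiv 2 (Fin 2 → ℝ)).symm ![a, b]
@[simp] lemma mk2_apply0 (a b : ℝ) : mk2 a b 0 = a := rfl
@[simp] lemma mk2_apply1 (a b : ℝ) : mk2 a b 1 = b := rfl
lemma dist_mk2 (a b c d : ℝ) : dist (mk2 a b) (mk2 c d) = Real.sqrt ((a-c)^2+(b-d)^2) := by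
  rw [EuclideanSpace.dist_eq, Fin.sum_univ_two]
  simp [mk2, Real.dist_eq, sq_abs]

/-- unit-distance preservation on a set -/
def UPres (S : Set E2) (f : E2 → Fin 2 → ℂ) : Prop :=
  ∀ u ∈ S, ∀ v ∈ S, dist u v = 1 → phi2 (f u) (f v) = 1

lemma UPres.mono {S T : Set E2} (hST : S ⊆ T) {f} (hf : UPres T f) : UPres S f :=
  fun u hu v hv h => hf u (hST hu) v (hST hv) h

/-- d is a "forced" distance -/
def Forced (d : ℝ) : Prop := 0 < d ∧ ∀ x y : E2, dist x y = d →
  ∃ S : Set E2, S.Finite ∧ x ∈ S ∧ y ∈ S ∧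
    ∀ f : E2 → (Fin 2 → ℂ), UPres S f → phi2 (f x) (f y) = (d:ℂ)^2

lemma forced_one : Forced 1 := by
  refine ⟨one_pos, fun x y hxy => ⟨{x, y}, (Set.finite_singleton y).insert x,
    Set.mem_insert _ _, Set.mem_insert_of_mem _ rfl, fun f hf => ?_⟩⟩
  have := hf x (Set.mem_insert _ _) y (Set.mem_insert_of_mem _ rfl) hxy
  simpa using this

lemma sqrt_mul_eq {A D t : ℝ} (hD : 0 ≤ D) (ht : 0 ≤ t) (hA : 0 ≤ A)
    (h : A * D^2 = t^2) : Real.sqrt A * D = t := by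
  rw [← Real.sqrt_sq hD, ← Real.sqrt_mul hA, h, Real.sqrt_sq ht]

lemma dist_sq_eq {x y : E2} {d : ℝ} (h : dist x y = d) :
    (y 0 - x 0)^2 + (y 1 - x 1)^2 = d^2 := by
  have := congrArg (·^2) h
  rw [EuclideanSpace.dist_eq, Fin.sum_univ_two, Real.sq_sqrt (by positivity)] at this
  simp only [Real.dist_eq, sq_abs] at this
  nlinarith [this]

noncomputable def ptt (x : E2) (u0 u1 p q : ℝ) : E2 :=
  mk2 (x 0 + p*u0 - q*u1) (x 1 + p*u1 + q*u0)

lemma dist_ptt (x : E2) (u0 u1 D : ℝ) (hD : 0 ≤ D) (hu : u0^2+u1^2 = D^2) (p q p' q' : ℝ) :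
    dist (ptt x u0 u1 p q) (ptt x u0 u1 p' q') = Real.sqrt ((p-p')^2+(q-q')^2) * D := by
  unfold ptt
  rw [dist_mk2, ← Real.sqrt_sq hD, ← Real.sqrt_mul (by positivity)]
  congr 1
  linear_combination ((p-p')^2+(q-q')^2) * hu

lemma ptt_zero (x : E2) (u0 u1 : ℝ) : ptt x u0 u1 0 0 = x := by
  ext i
  fin_cases i <;> simp [ptt, mk2]

lemma ptt_one (x y : E2) : ptt x (y 0 - x 0) (y 1 - x 1) 1 0 = y := by
  ext i
  fin_cases i <;> simp [ptt, mk2]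

set_option maxHeartbeats 1000000 in
lemma kiteForced {s t1 t2 e D : ℝ} (hs : Forced s) (ht1 : Forced t1) (ht2 : Forced t2)
    (he : Forced e) (hD : 0 < D)
    (hval : D^2 * s^2 = 4*t1^2*s^2 - (t1^2 - t2^2 + s^2)^2)
    (hchord : e^2 ≤ 4*D^2) (hne : e ≠ D) : Forced D := by
  obtain ⟨hs0, hsF⟩ := hs
  obtain ⟨ht10, ht1F⟩ := ht1
  obtain ⟨ht20, ht2F⟩ := ht2
  obtain ⟨he0, heF⟩ := he
  refine ⟨hD, fun x y hxy => ?_⟩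
  have hu : (y 0 - x 0)^2 + (y 1 - x 1)^2 = D^2 := dist_sq_eq hxy
  set u0 := y 0 - x 0 with hu0d
  set u1 := y 1 - x 1 with hu1d
  set c1 := (t1^2 - t2^2 + s^2)/(2*s) with hc1
  set c2 := (t1^2 - t2^2 - s^2)/(2*s) with hc2
  set co := 1 - e^2/(2*D^2) with hco
  have hco' : 2*D^2*co = 2*D^2 - e^2 := by rw [hco]; field_simp
  have h2d : (0:ℝ) < 2*D^2 := by positivity
  have h1co : 0 ≤ 1 - co^2 := by
    have h1 : co ≤ 1 := by
      have := (mul_le_mul_iff_right₀ h2d).1 (show 2*D^2*co ≤ 2*D^2*1 by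
        linarith [hco', sq_nonneg e])
      linarith
    have h2 : -1 ≤ co := by
      have := (mul_le_mul_iff_right₀ h2d).1 (show 2*D^2*(-1) ≤ 2*D^2*co by
        linarith [hco', hchord])
      linarith
    have hprod := mul_nonneg (sub_nonneg.2 h1) (show (0:ℝ) ≤ 1 + co by linarith)
    have hexp : (1-co)*(1+co) = 1 - co^2 := by ring
    linarith [hexp ▸ hprod]
  set si := Real.sqrt (1 - co^2) with hsi
  have hsi2 : si^2 = 1 - co^2 := Real.sq_sqrt h1co
  have hcosi : co^2 + si^2 = 1 := by rw [hsi2]; ring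
  set a := ptt x u0 u1 (1/2) (c1/D) with ha
  set b := ptt x u0 u1 (1/2) (c2/D) with hb
  set y' := ptt x u0 u1 co si with hy'
  set a' := ptt x u0 u1 (co/2 - si*(c1/D)) (si/2 + co*(c1/D)) with ha'
  set b' := ptt x u0 u1 (co/2 - si*(c2/D)) (si/2 + co*(c2/D)) with hb'
  have hx0 : x = ptt x u0 u1 0 0 := (ptt_zero x u0 u1).symm
  have hy0 : y = ptt x u0 u1 1 0 := (ptt_one x y).symm
  have DP := dist_ptt x u0 u1 D hD.le hu
  have hc1sq : (c1/D)^2*D^2 = c1^2 := by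
    rw [div_pow, div_mul_cancel₀ _ (pow_ne_zero 2 hD.ne')]
  have hc2sq : (c2/D)^2*D^2 = c2^2 := by
    rw [div_pow, div_mul_cancel₀ _ (pow_ne_zero 2 hD.ne')]
  have hc1v : 4*s^2*c1^2 = (t1^2-t2^2+s^2)^2 := by rw [hc1]; field_simp; ring
  have hc2v : 4*s^2*c2^2 = (t1^2-t2^2-s^2)^2 := by rw [hc2]; field_simp; ring
  have key1 : ((1:ℝ)/2)^2 * D^2 + (c1/D)^2 * D^2 = t1^2 := by
    have h4 : (4*s^2) * (((1:ℝ)/2)^2*D^2 + (c1/D)^2*D^2) = (4*s^2)*t1^2 := by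
      linear_combination 4*s^2*hc1sq + hc1v + hval
    exact mul_left_cancel₀ (by positivity) h4
  have key2 : ((1:ℝ)/2)^2 * D^2 + (c2/D)^2 * D^2 = t2^2 := by
    have h4 : (4*s^2) * (((1:ℝ)/2)^2*D^2 + (c2/D)^2*D^2) = (4*s^2)*t2^2 := by
      linear_combination 4*s^2*hc2sq + hc2v + hval
    exact mul_left_cancel₀ (by positivity) h4
  have keyab : (c1/D - c2/D)^2 * D^2 = s^2 := by
    have hc1c2 : c1 - c2 = s := by
      rw [hc1, hc2, div_sub_div_same,
        show t1^2-t2^2+s^2 - (t1^2-t2^2-s^2) = s*(2*s) by ring]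
      exact mul_div_cancel_right₀ s (by positivity)
    rw [div_sub_div_same, div_pow, div_mul_eq_mul_div, mul_div_assoc,
      div_self (by positivity), mul_one, hc1c2]
  have dxa : dist x a = t1 := by
    rw [hx0, ha, DP]
    exact sqrt_mul_eq hD.le ht10.le (by positivity) (by linear_combination key1)
  have dya : dist y a = t1 := by
    rw [hy0, ha, DP]
    exact sqrt_mul_eq hD.le ht10.le (by positivity) (by linear_combination key1)
  have dxb : dist x b = t2 := by
    rw [hx0, hb, DP]
    exact sqrt_mul_eq hD.le ht20.le (by positivity) (by linear_combination key2)
  have dyb : dist y b = t2 := by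
    rw [hy0, hb, DP]
    exact sqrt_mul_eq hD.le ht20.le (by positivity) (by linear_combination key2)
  have dab : dist a b = s := by
    rw [ha, hb, DP]
    exact sqrt_mul_eq hD.le hs0.le (by positivity) (by linear_combination keyab)
  have dxy' : dist x y' = D := by
    rw [hx0, hy', DP]
    refine sqrt_mul_eq hD.le hD.le (by positivity) ?_
    linear_combination D^2 * hcosi
  have dyy' : dist y y' = e := by
    rw [hy0, hy', DP]
    refine sqrt_mul_eq hD.le he0.le (by positivity) ?_
    linear_combination D^2*hsi2 - hco'
  have dxa' : dist x a' = t1 := by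
    rw [hx0, ha', DP]
    refine sqrt_mul_eq hD.le ht10.le (by positivity) ?_
    linear_combination ((1/4 + (c1/D)^2)*D^2)*hcosi + key1
  have dy'a' : dist y' a' = t1 := by
    rw [hy', ha', DP]
    refine sqrt_mul_eq hD.le ht10.le (by positivity) ?_
    linear_combination ((1/4 + (c1/D)^2)*D^2)*hcosi + key1
  have dxb' : dist x b' = t2 := by
    rw [hx0, hb', DP]
    refine sqrt_mul_eq hD.le ht20.le (by positivity) ?_
    linear_combination ((1/4 + (c2/D)^2)*D^2)*hcosi + key2
  have dy'b' : dist y' b' = t2 := by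
    rw [hy', hb', DP]
    refine sqrt_mul_eq hD.le ht20.le (by positivity) ?_
    linear_combination ((1/4 + (c2/D)^2)*D^2)*hcosi + key2
  have da'b' : dist a' b' = s := by
    rw [ha', hb', DP]
    refine sqrt_mul_eq hD.le hs0.le (by positivity) ?_
    linear_combination ((c1/D - c2/D)^2*D^2)*hcosi + keyab
  obtain ⟨S1, S1f, m1a, m1b, H1⟩ := hsF a b dab
  obtain ⟨S2, S2f, m2a, m2b, H2⟩ := ht1F x a dxa
  obtain ⟨S3, S3f, m3a, m3b, H3⟩ := ht1F y a dya
  obtain ⟨S4, S4f, m4a, m4b, H4⟩ := ht2F x b dxb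
  obtain ⟨S5, S5f, m5a, m5b, H5⟩ := ht2F y b dyb
  obtain ⟨S6, S6f, m6a, m6b, H6⟩ := hsF a' b' da'b'
  obtain ⟨S7, S7f, m7a, m7b, H7⟩ := ht1F x a' dxa'
  obtain ⟨S8, S8f, m8a, m8b, H8⟩ := ht1F y' a' dy'a'
  obtain ⟨S9, S9f, m9a, m9b, H9⟩ := ht2F x b' dxb'
  obtain ⟨S10, S10f, m10a, m10b, H10⟩ := ht2F y' b' dy'b'
  obtain ⟨S11, S11f, m11a, m11b, H11⟩ := heF y y' dyy'
  have sub1 : S1 ⊆ S1 ∪ S2 ∪ S3 ∪ S4 ∪ S5 ∪ S6 ∪ S7 ∪ S8 ∪ S9 ∪ S10 ∪ S11 := fun z hz => Set.mem_union_left _ (Set.mem_union_left _ (Set.mem_union_left _ (Set.mem_union_left _ (Set.mem_union_left _ (Set.mem_union_left _ (Set.mem_union_left _ (Set.mem_union_left _ (Set.mem_union_left _ (Set.mem_union_left _ (hz))))))))))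
  have sub2 : S2 ⊆ S1 ∪ S2 ∪ S3 ∪ S4 ∪ S5 ∪ S6 ∪ S7 ∪ S8 ∪ S9 ∪ S10 ∪ S11 := fun z hz => Set.mem_union_left _ (Set.mem_union_left _ (Set.mem_union_left _ (Set.mem_union_left _ (Set.mem_union_left _ (Set.mem_union_left _ (Set.mem_union_left _ (Set.mem_union_left _ (Set.mem_union_left _ (Set.mem_union_right _ hz)))))))))
  have sub3 : S3 ⊆ S1 ∪ S2 ∪ S3 ∪ S4 ∪ S5 ∪ S6 ∪ S7 ∪ S8 ∪ S9 ∪ S10 ∪ S11 := fun z hz => Set.mem_union_left _ (Set.mem_union_left _ (Set.mem_union_left _ (Set.mem_union_left _ (Set.mem_union_left _ (Set.mem_union_left _ (Set.mem_union_left _ (Set.mem_union_left _ (Set.mem_union_right _ hz))))))))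
  have sub4 : S4 ⊆ S1 ∪ S2 ∪ S3 ∪ S4 ∪ S5 ∪ S6 ∪ S7 ∪ S8 ∪ S9 ∪ S10 ∪ S11 := fun z hz => Set.mem_union_left _ (Set.mem_union_left _ (Set.mem_union_left _ (Set.mem_union_left _ (Set.mem_union_left _ (Set.mem_union_left _ (Set.mem_union_left _ (Set.mem_union_right _ hz)))))))
  have sub5 : S5 ⊆ S1 ∪ S2 ∪ S3 ∪ S4 ∪ S5 ∪ S6 ∪ S7 ∪ S8 ∪ S9 ∪ S10 ∪ S11 := fun z hz => Set.mem_union_left _ (Set.mem_union_left _ (Set.mem_union_left _ (Set.mem_union_left _ (Set.mem_union_left _ (Set.mem_union_left _ (Set.mem_union_right _ hz))))))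
  have sub6 : S6 ⊆ S1 ∪ S2 ∪ S3 ∪ S4 ∪ S5 ∪ S6 ∪ S7 ∪ S8 ∪ S9 ∪ S10 ∪ S11 := fun z hz => Set.mem_union_left _ (Set.mem_union_left _ (Set.mem_union_left _ (Set.mem_union_left _ (Set.mem_union_left _ (Set.mem_union_right _ hz)))))
  have sub7 : S7 ⊆ S1 ∪ S2 ∪ S3 ∪ S4 ∪ S5 ∪ S6 ∪ S7 ∪ S8 ∪ S9 ∪ S10 ∪ S11 := fun z hz => Set.mem_union_left _ (Set.mem_union_left _ (Set.mem_union_left _ (Set.mem_union_left _ (Set.mem_union_right _ hz))))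
  have sub8 : S8 ⊆ S1 ∪ S2 ∪ S3 ∪ S4 ∪ S5 ∪ S6 ∪ S7 ∪ S8 ∪ S9 ∪ S10 ∪ S11 := fun z hz => Set.mem_union_left _ (Set.mem_union_left _ (Set.mem_union_left _ (Set.mem_union_right _ hz)))
  have sub9 : S9 ⊆ S1 ∪ S2 ∪ S3 ∪ S4 ∪ S5 ∪ S6 ∪ S7 ∪ S8 ∪ S9 ∪ S10 ∪ S11 := fun z hz => Set.mem_union_left _ (Set.mem_union_left _ (Set.mem_union_right _ hz))
  have sub10 : S10 ⊆ S1 ∪ S2 ∪ S3 ∪ S4 ∪ S5 ∪ S6 ∪ S7 ∪ S8 ∪ S9 ∪ S10 ∪ S11 := fun z hz => Set.mem_union_left _ (Set.mem_union_right _ hz)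
  have sub11 : S11 ⊆ S1 ∪ S2 ∪ S3 ∪ S4 ∪ S5 ∪ S6 ∪ S7 ∪ S8 ∪ S9 ∪ S10 ∪ S11 := fun z hz => Set.mem_union_right _ hz
  refine ⟨S1 ∪ S2 ∪ S3 ∪ S4 ∪ S5 ∪ S6 ∪ S7 ∪ S8 ∪ S9 ∪ S10 ∪ S11, ?_, ?_, ?_, ?_⟩
  · exact (((((((((S1f.union S2f).union S3f).union S4f).union S5f).union S6f).union S7f).union S8f).union S9f).union S10f).union S11f
  · exact sub2 m2a
  · exact sub3 m3a
  intro f hf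
  have p1 := H1 f (hf.mono sub1)
  have p2 := H2 f (hf.mono sub2)
  have p3 := H3 f (hf.mono sub3)
  have p4 := H4 f (hf.mono sub4)
  have p5 := H5 f (hf.mono sub5)
  have p6 := H6 f (hf.mono sub6)
  have p7 := H7 f (hf.mono sub7)
  have p8 := H8 f (hf.mono sub8)
  have p9 := H9 f (hf.mono sub9)
  have p10 := H10 f (hf.mono sub10)
  have p11 := H11 f (hf.mono sub11)
  have hsC : ((s:ℝ):ℂ)^2 ≠ 0 := pow_ne_zero 2 (Complex.ofReal_ne_zero.2 hs0.ne')
  have hvalC : ((D:ℝ):ℂ)^2 * ((s:ℝ):ℂ)^2 = 4*((t1:ℝ):ℂ)^2*((s:ℝ):ℂ)^2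
      - (((t1:ℝ):ℂ)^2-((t2:ℝ):ℂ)^2+((s:ℝ):ℂ)^2)^2 := by
    exact_mod_cast congrArg (fun r : ℝ => (r:ℂ)) hval
  have hEq : 4*((t1:ℝ):ℂ)^2 - (((t1:ℝ):ℂ)^2-((t2:ℝ):ℂ)^2+((s:ℝ):ℂ)^2)^2/((s:ℝ):ℂ)^2
      = ((D:ℝ):ℂ)^2 := by
    have hs' : ((s:ℝ):ℂ) ≠ 0 := Complex.ofReal_ne_zero.2 hs0.ne'
    field_simp
    linear_combination -hvalC
  have k1 := kiteC (f a) (f b) (f x) (f y) _ _ _ hsC p1 p2 p4 p3 p5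
  rcases k1 with h1 | h1
  · -- f x = f y ; use the second kite to derive a contradiction
    exfalso
    have k2 := kiteC (f a') (f b') (f x) (f y') _ _ _ hsC p6 p7 p9 p8 p10
    have heC : ((e:ℝ):ℂ)^2 ≠ 0 := pow_ne_zero 2 (Complex.ofReal_ne_zero.2 he0.ne')
    rcases k2 with h2 | h2
    · have hyy' : f y = f y' := h1 ▸ h2
      have : phi2 (f y) (f y') = 0 := by rw [hyy']; unfold phi2; ring
      rw [p11] at this
      exact heC this
    · rw [hEq] at h2
      rw [← h1] at p11
      rw [p11] at h2
      have he2 : e^2 = D^2 := by exact_mod_cast h2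
      have : e = D := by
        rw [← Real.sqrt_sq he0.le, ← Real.sqrt_sq hD.le, he2]
      exact hne this
  · rw [hEq] at h1
    exact h1

set_option maxHeartbeats 1000000 in
lemma triForced {d : ℝ} (hd : Forced d) (hd3 : Forced (Real.sqrt 3 * d)) :
    Forced (2*d) := by
  obtain ⟨hd0, hdF⟩ := hd
  obtain ⟨hd30, hd3F⟩ := hd3
  refine ⟨by linarith, fun x y hxy => ?_⟩
  have hu : (y 0 - x 0)^2 + (y 1 - x 1)^2 = (2*d)^2 := dist_sq_eq hxy
  set u0 := y 0 - x 0 with hu0d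
  set u1 := y 1 - x 1 with hu1d
  set s4 := Real.sqrt 3/4 with hs4d
  have hs4 : s4^2 = 3/16 := by
    rw [hs4d, div_pow, Real.sq_sqrt (by norm_num)]; norm_num
  have h3d : (Real.sqrt 3*d)^2 = 3*d^2 := by
    rw [mul_pow, Real.sq_sqrt (by norm_num)]
  set q := ptt x u0 u1 (1/2) 0 with hq
  set r := ptt x u0 u1 (1/4) s4 with hr
  set w := ptt x u0 u1 (3/4) s4 with hw
  have hx0 : x = ptt x u0 u1 0 0 := (ptt_zero x u0 u1).symm
  have hy0 : y = ptt x u0 u1 1 0 := (ptt_one x y).symm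
  have DP := dist_ptt x u0 u1 (2*d) (by linarith) hu
  have dxq : dist x q = d := by
    rw [hx0, hq, DP]
    exact sqrt_mul_eq (by linarith) hd0.le (by positivity) (by ring)
  have dxr : dist x r = d := by
    rw [hx0, hr, DP]
    exact sqrt_mul_eq (by linarith) hd0.le (by positivity) (by linear_combination 4*d^2*hs4)
  have dqr : dist q r = d := by
    rw [hq, hr, DP]
    exact sqrt_mul_eq (by linarith) hd0.le (by positivity) (by linear_combination 4*d^2*hs4)
  have dqw : dist q w = d := by
    rw [hq, hw, DP]
    exact sqrt_mul_eq (by linarith) hd0.le (by positivity) (by linear_combination 4*d^2*hs4)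
  have drw : dist r w = d := by
    rw [hr, hw, DP]
    exact sqrt_mul_eq (by linarith) hd0.le (by positivity) (by ring)
  have dxw : dist x w = Real.sqrt 3 * d := by
    rw [hx0, hw, DP]
    exact sqrt_mul_eq (by linarith) hd30.le (by positivity)
      (by linear_combination 4*d^2*hs4 - h3d)
  have dqy : dist q y = d := by
    rw [hy0, hq, DP]
    exact sqrt_mul_eq (by linarith) hd0.le (by positivity) (by ring)
  have dry : dist r y = Real.sqrt 3 * d := by
    rw [hy0, hr, DP]
    exact sqrt_mul_eq (by linarith) hd30.le (by positivity)
      (by linear_combination 4*d^2*hs4 - h3d)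
  have dwy : dist w y = d := by
    rw [hy0, hw, DP]
    exact sqrt_mul_eq (by linarith) hd0.le (by positivity) (by linear_combination 4*d^2*hs4)
  obtain ⟨S1, S1f, m1a, m1b, H1⟩ := hdF x q dxq
  obtain ⟨S2, S2f, m2a, m2b, H2⟩ := hdF x r dxr
  obtain ⟨S3, S3f, m3a, m3b, H3⟩ := hdF q r dqr
  obtain ⟨S4, S4f, m4a, m4b, H4⟩ := hdF q w dqw
  obtain ⟨S5, S5f, m5a, m5b, H5⟩ := hdF r w drw
  obtain ⟨S6, S6f, m6a, m6b, H6⟩ := hd3F x w dxw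
  obtain ⟨S7, S7f, m7a, m7b, H7⟩ := hdF q y dqy
  obtain ⟨S8, S8f, m8a, m8b, H8⟩ := hd3F r y dry
  obtain ⟨S9, S9f, m9a, m9b, H9⟩ := hdF w y dwy
  have sub1 : S1 ⊆ S1 ∪ S2 ∪ S3 ∪ S4 ∪ S5 ∪ S6 ∪ S7 ∪ S8 ∪ S9 := fun z hz =>
    Set.mem_union_left _ (Set.mem_union_left _ (Set.mem_union_left _ (Set.mem_union_left _ (Set.mem_union_left _ (Set.mem_union_left _ (Set.mem_union_left _ (Set.mem_union_left _ hz)))))))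
  have sub2 : S2 ⊆ S1 ∪ S2 ∪ S3 ∪ S4 ∪ S5 ∪ S6 ∪ S7 ∪ S8 ∪ S9 := fun z hz =>
    Set.mem_union_left _ (Set.mem_union_left _ (Set.mem_union_left _ (Set.mem_union_left _ (Set.mem_union_left _ (Set.mem_union_left _ (Set.mem_union_left _ (Set.mem_union_right _ hz)))))))
  have sub3 : S3 ⊆ S1 ∪ S2 ∪ S3 ∪ S4 ∪ S5 ∪ S6 ∪ S7 ∪ S8 ∪ S9 := fun z hz =>
    Set.mem_union_left _ (Set.mem_union_left _ (Set.mem_union_left _ (Set.mem_union_left _ (Set.mem_union_left _ (Set.mem_union_left _ (Set.mem_union_right _ hz))))))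
  have sub4 : S4 ⊆ S1 ∪ S2 ∪ S3 ∪ S4 ∪ S5 ∪ S6 ∪ S7 ∪ S8 ∪ S9 := fun z hz =>
    Set.mem_union_left _ (Set.mem_union_left _ (Set.mem_union_left _ (Set.mem_union_left _ (Set.mem_union_left _ (Set.mem_union_right _ hz)))))
  have sub5 : S5 ⊆ S1 ∪ S2 ∪ S3 ∪ S4 ∪ S5 ∪ S6 ∪ S7 ∪ S8 ∪ S9 := fun z hz =>
    Set.mem_union_left _ (Set.mem_union_left _ (Set.mem_union_left _ (Set.mem_union_left _ (Set.mem_union_right _ hz))))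
  have sub6 : S6 ⊆ S1 ∪ S2 ∪ S3 ∪ S4 ∪ S5 ∪ S6 ∪ S7 ∪ S8 ∪ S9 := fun z hz =>
    Set.mem_union_left _ (Set.mem_union_left _ (Set.mem_union_left _ (Set.mem_union_right _ hz)))
  have sub7 : S7 ⊆ S1 ∪ S2 ∪ S3 ∪ S4 ∪ S5 ∪ S6 ∪ S7 ∪ S8 ∪ S9 := fun z hz =>
    Set.mem_union_left _ (Set.mem_union_left _ (Set.mem_union_right _ hz))
  have sub8 : S8 ⊆ S1 ∪ S2 ∪ S3 ∪ S4 ∪ S5 ∪ S6 ∪ S7 ∪ S8 ∪ S9 := fun z hz =>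
    Set.mem_union_left _ (Set.mem_union_right _ hz)
  have sub9 : S9 ⊆ S1 ∪ S2 ∪ S3 ∪ S4 ∪ S5 ∪ S6 ∪ S7 ∪ S8 ∪ S9 := fun z hz =>
    Set.mem_union_right _ hz
  refine ⟨S1 ∪ S2 ∪ S3 ∪ S4 ∪ S5 ∪ S6 ∪ S7 ∪ S8 ∪ S9, ?_, ?_, ?_, ?_⟩
  · exact (((((((S1f.union S2f).union S3f).union S4f).union S5f).union S6f).union S7f).union S8f).union S9f
  · exact sub1 m1a
  · exact sub7 m7b
  intro f hf
  have p1 := H1 f (hf.mono sub1)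
  have p2 := H2 f (hf.mono sub2)
  have p3 := H3 f (hf.mono sub3)
  have p4 := H4 f (hf.mono sub4)
  have p5 := H5 f (hf.mono sub5)
  have p6 := H6 f (hf.mono sub6)
  have p7 := H7 f (hf.mono sub7)
  have p8 := H8 f (hf.mono sub8)
  have p9 := H9 f (hf.mono sub9)
  have hm : ((d:ℝ):ℂ)^2 ≠ 0 := pow_ne_zero 2 (Complex.ofReal_ne_zero.2 hd0.ne')
  have cast3 : ((Real.sqrt 3 * d : ℝ) : ℂ)^2 = 3*((d:ℝ):ℂ)^2 := by
    rw [show ((Real.sqrt 3 * d : ℝ) : ℂ)^2 = (((Real.sqrt 3 * d)^2 : ℝ) : ℂ) by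
      push_cast; ring, h3d]
    push_cast; ring
  have := triC (f x) (f q) (f r) (f w) (f y) (((d:ℝ):ℂ)^2) hm
    p1 p2 p3 p4 p5 (by rw [p6, cast3]) p7 (by rw [p8, cast3]) p9
  rw [this]
  push_cast; ring

lemma sqrt3_gt_one : (1:ℝ) < Real.sqrt 3 := by
  rw [show (1:ℝ) = Real.sqrt 1 by simp]
  exact Real.sqrt_lt_sqrt (by norm_num) (by norm_num)

lemma ruleB {d : ℝ} (hd : Forced d) : Forced (Real.sqrt 3 * d) := by
  have hd0 := hd.1
  refine kiteForced hd hd hd hd (by positivity) ?_ ?_ ?_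
  · simp only [mul_pow]; rw [Real.sq_sqrt (show (0:ℝ) ≤ 3 by norm_num)]; ring
  · simp only [mul_pow]; rw [Real.sq_sqrt (show (0:ℝ) ≤ 3 by norm_num)]
    nlinarith [sq_nonneg d]
  · intro h
    nlinarith [sqrt3_gt_one, hd0]

lemma ruleC {d : ℝ} (hd : Forced d) : Forced (Real.sqrt (11/3) * d) := by
  have hd0 := hd.1
  refine kiteForced (ruleB hd) hd (ruleB hd) hd (by positivity) ?_ ?_ ?_
  · simp only [mul_pow]
    rw [Real.sq_sqrt (show (0:ℝ) ≤ 11/3 by norm_num),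
      Real.sq_sqrt (show (0:ℝ) ≤ 3 by norm_num)]
    ring
  · simp only [mul_pow]
    rw [Real.sq_sqrt (show (0:ℝ) ≤ 11/3 by norm_num)]
    nlinarith [sq_nonneg d]
  · intro h
    have h11 : (1:ℝ) < Real.sqrt (11/3) := by
      rw [show (1:ℝ) = Real.sqrt 1 by simp]
      exact Real.sqrt_lt_sqrt (by norm_num) (by norm_num)
    nlinarith [hd0]

lemma ruleD {d : ℝ} (hd : Forced d) : Forced (Real.sqrt (1/3) * d) := by
  have hd0 := hd.1
  refine kiteForced (ruleC hd) hd hd hd (by positivity) ?_ ?_ ?_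
  · simp only [mul_pow]
    rw [Real.sq_sqrt (show (0:ℝ) ≤ 11/3 by norm_num),
      Real.sq_sqrt (show (0:ℝ) ≤ 1/3 by norm_num)]
    ring
  · simp only [mul_pow]
    rw [Real.sq_sqrt (show (0:ℝ) ≤ 1/3 by norm_num)]
    nlinarith [sq_nonneg d]
  · intro h
    have h13 : Real.sqrt (1/3) < 1 := by
      rw [show (1:ℝ) = Real.sqrt 1 by simp]
      exact Real.sqrt_lt_sqrt (by norm_num) (by norm_num)
    nlinarith [hd0]

lemma ruleE {d : ℝ} (hd : Forced d) : Forced (2*d) := triForced hd (ruleB hd)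

lemma ruleF {d : ℝ} (hd : Forced d) : Forced (Real.sqrt 8 * d) := by
  have hd0 := hd.1
  refine kiteForced (ruleE hd) (ruleB hd) (ruleB hd) hd (by positivity) ?_ ?_ ?_
  · simp only [mul_pow]
    rw [Real.sq_sqrt (show (0:ℝ) ≤ 8 by norm_num),
      Real.sq_sqrt (show (0:ℝ) ≤ 3 by norm_num)]
    ring
  · simp only [mul_pow]
    rw [Real.sq_sqrt (show (0:ℝ) ≤ 8 by norm_num)]
    nlinarith [sq_nonneg d]
  · intro h
    have h8 : (1:ℝ) < Real.sqrt 8 := by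
      rw [show (1:ℝ) = Real.sqrt 1 by simp]
      exact Real.sqrt_lt_sqrt (by norm_num) (by norm_num)
    nlinarith [hd0]

lemma Forced_congr {d d' : ℝ} (h : Forced d) (e : d = d') : Forced d' := e ▸ h

lemma ruleG {d : ℝ} (hd : Forced d) : Forced (2*Real.sqrt 2/3*d) := by
  refine Forced_congr (ruleD (ruleD (ruleF hd))) ?_
  have h13 : Real.sqrt (1/3) * Real.sqrt (1/3) = 1/3 := Real.mul_self_sqrt (by norm_num)
  have h8 : Real.sqrt 8 = 2*Real.sqrt 2 := by
    rw [show (8:ℝ) = 2^2*2 by norm_num, Real.sqrt_mul (by positivity),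
      Real.sqrt_sq (by norm_num)]
  rw [h8]
  calc Real.sqrt (1/3) * (Real.sqrt (1/3) * (2*Real.sqrt 2 * d))
      = (Real.sqrt (1/3) * Real.sqrt (1/3)) * (2*Real.sqrt 2 * d) := by ring
    _ = 2*Real.sqrt 2/3*d := by rw [h13]; ring

lemma forced_all (k l : ℕ) : Forced ((2 * Real.sqrt 2 / 3) ^ k * Real.sqrt 3 ^ l) := by
  induction k with
  | zero =>
    induction l with
    | zero => simpa using forced_one
    | succ n ih =>
      refine Forced_congr (ruleB ih) ?_
      rw [pow_succ]; ring
  | succ n ih =>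
    refine Forced_congr (ruleG ih) ?_
    rw [pow_succ]; ring

theorem exists_finite_rigid_set (x y : EuclideanSpace ℝ (Fin 2)) (k l : ℕ)
    (h : dist x y = (2 * Real.sqrt 2 / 3) ^ k * Real.sqrt 3 ^ l) :
    ∃ S : Set (EuclideanSpace ℝ (Fin 2)), S.Finite ∧ x ∈ S ∧ y ∈ S ∧
      ∀ f : EuclideanSpace ℝ (Fin 2) → (Fin 2 → ℂ),
        (∀ u ∈ S, ∀ v ∈ S, dist u v = 1 → phi2 (f u) (f v) = 1) →
        phi2 (f x) (f y) = ((dist x y : ℝ) : ℂ) ^ 2 := by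
  obtain ⟨S, Sf, mx, my, H⟩ := (forced_all k l).2 x y h
  exact ⟨S, Sf, mx, my, fun f hf => by rw [h]; exact H f hf⟩
end

section
/- Every continuous map f : ℝ² → ℂ² that preserves unit distance preserves all distances; that is, if f is continuous and φ(f(x), f(y)) = 1 whenever x, y ∈ ℝ² satisfy |x−y| = 1, then for every d ≥ 0 and all x, y ∈ ℝ² with |x−y| = d one has φ(f(x), f(y)) = d². -/
set_option maxHeartbeats 1600000

namespace BQ2

abbrev E2 := EuclideanSpace ℝ (Fin 2)

lemma phi2_self (p : Fin 2 → ℂ) : phi2 p p = 0 := by simp [phi2]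

lemma phi2_comm (p q : Fin 2 → ℂ) : phi2 p q = phi2 q p := by unfold phi2; ring

/-- Cayley–Menger-type determinant expression for 4 points of `ℂ²`. -/
noncomputable def cmdet (a b c d e g : ℂ) : ℂ :=
  (2*a)*((2*b)*(2*c) - (b+c-g)^2) - (a+b-d)*((a+b-d)*(2*c) - (b+c-g)*(a+c-e))
    + (a+c-e)*((a+b-d)*(b+c-g) - (2*b)*(a+c-e))

lemma cm (p0 p1 p2 p3 : Fin 2 → ℂ) :
    cmdet (phi2 p0 p1) (phi2 p0 p2) (phi2 p0 p3) (phi2 p1 p2) (phi2 p1 p3) (phi2 p2 p3) = 0 := by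
  unfold cmdet phi2; ring

/-- distance-preservation predicate -/
def Pres (f : E2 → (Fin 2 → ℂ)) (r : ℝ) : Prop :=
  ∀ x y : E2, dist x y = r → phi2 (f x) (f y) = (r : ℂ)^2
noncomputable def ee (i : Fin 2) : E2 := EuclideanSpace.single i 1

/-- frame point: coordinates (α, β) in the frame based at `x` with first axis towards `y`. -/
noncomputable def fr (x y : E2) (α β : ℝ) : E2 :=
  x + (α / dist x y) • (y - x)
    + (β / dist x y) • ((-(y 1 - x 1)) • ee 0 + (y 0 - x 0) • ee 1)

lemma ee_apply (i j : Fin 2) : (ee i) j = if j = i then 1 else 0 := by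
  simp [ee, EuclideanSpace.single_apply]

lemma fr_apply0 (x y : E2) (α β : ℝ) :
    fr x y α β 0 = x 0 + (α / dist x y) * (y 0 - x 0) + (β / dist x y) * (-(y 1 - x 1)) := by
  simp [fr, ee_apply]

lemma fr_apply1 (x y : E2) (α β : ℝ) :
    fr x y α β 1 = x 1 + (α / dist x y) * (y 1 - x 1) + (β / dist x y) * (y 0 - x 0) := by
  simp [fr, ee_apply]

lemma dist_coords (x y : E2) : dist x y = Real.sqrt ((x 0 - y 0)^2 + (x 1 - y 1)^2) := by
  rw [EuclideanSpace.dist_eq]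
  congr 1
  rw [Fin.sum_univ_two]
  simp [Real.dist_eq, sq_abs]

lemma sum_sq (x y : E2) {d : ℝ} (hd : 0 ≤ d) (h : dist x y = d) :
    (y 0 - x 0)^2 + (y 1 - x 1)^2 = d^2 := by
  rw [dist_coords] at h
  have := Real.sq_sqrt (by positivity : (0:ℝ) ≤ (x 0 - y 0)^2 + (x 1 - y 1)^2)
  rw [h] at this
  nlinarith [this]

lemma dist_fr (x y : E2) {d : ℝ} (hd : 0 < d) (h : dist x y = d) (α β α' β' : ℝ) :
    dist (fr x y α β) (fr x y α' β') = Real.sqrt ((α - α')^2 + (β - β')^2) := by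
  have hv := sum_sq x y hd.le h
  rw [dist_coords]
  congr 1
  rw [fr_apply0, fr_apply1, fr_apply0, fr_apply1, h]
  have hd' : d ≠ 0 := ne_of_gt hd
  field_simp
  nlinarith [hv]

lemma fr_zero (x y : E2) : fr x y 0 0 = x := by
  simp [fr]

lemma fr_d (x y : E2) {d : ℝ} (hd : 0 < d) (h : dist x y = d) : fr x y d 0 = y := by
  unfold fr
  rw [h, div_self (ne_of_gt hd)]
  simp

lemma sqrt_eval {A t : ℝ} (h : A = t^2) (ht : 0 ≤ t) : Real.sqrt A = t := by
  rw [h, Real.sqrt_sq ht]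

lemma dist_fr_eq (x y : E2) {d t : ℝ} (hd : 0 < d) (h : dist x y = d) (α β α' β' : ℝ)
    (ht : 0 ≤ t) (hval : (α - α')^2 + (β - β')^2 = t^2) :
    dist (fr x y α β) (fr x y α' β') = t := by
  rw [dist_fr x y hd h]; exact sqrt_eval hval ht

/-- circle point -/
noncomputable def cp (x : E2) (r θ : ℝ) : E2 :=
  x + (r * Real.cos θ) • ee 0 + (r * Real.sin θ) • ee 1

lemma dist_cp (x : E2) {r : ℝ} (hr : 0 ≤ r) (θ : ℝ) : dist x (cp x r θ) = r := by
  rw [dist_coords]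
  have h0 : (cp x r θ) 0 = x 0 + r * Real.cos θ := by simp [cp, ee_apply]
  have h1 : (cp x r θ) 1 = x 1 + r * Real.sin θ := by simp [cp, ee_apply]
  rw [h0, h1]
  have : (x 0 - (x 0 + r * Real.cos θ))^2 + (x 1 - (x 1 + r * Real.sin θ))^2 = r^2 := by
    have := Real.sin_sq_add_cos_sq θ
    nlinarith [this]
  rw [this, Real.sqrt_sq hr]

lemma exists_cp {x y : E2} {r : ℝ} (hr : 0 < r) (h : dist x y = r) : ∃ θ, y = cp x r θ := by
  set v0 := y 0 - x 0 with hv0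
  set v1 := y 1 - x 1 with hv1
  have hv : v0^2 + v1^2 = r^2 := by
    rw [dist_coords] at h
    have hnn : (0:ℝ) ≤ (x 0 - y 0)^2 + (x 1 - y 1)^2 := by positivity
    have := Real.sq_sqrt hnn
    rw [h] at this
    rw [hv0, hv1]
    nlinarith [this]
  set z : ℂ := ⟨v0, v1⟩ with hz
  have hzne : z ≠ 0 := by
    intro hzz
    have : v0 = 0 ∧ v1 = 0 := by
      constructor
      · exact congrArg Complex.re hzz
      · exact congrArg Complex.im hzz
    nlinarith [this.1, this.2, hr]
  have habs : ‖z‖ = r := by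
    rw [Complex.norm_def, Complex.normSq_mk]
    have : v0 * v0 + v1 * v1 = r^2 := by nlinarith [hv]
    rw [this, Real.sqrt_sq hr.le]
  refine ⟨Complex.arg z, ?_⟩
  have hcos : r * Real.cos (Complex.arg z) = v0 := by
    rw [Complex.cos_arg hzne, habs]
    field_simp
    rfl
  have hsin : r * Real.sin (Complex.arg z) = v1 := by
    rw [Complex.sin_arg, habs]
    field_simp
    rfl
  apply PiLp.ext
  intro i
  fin_cases i
  · show y 0 = cp x r (Complex.arg z) 0
    have : (cp x r (Complex.arg z)) 0 = x 0 + r * Real.cos (Complex.arg z) := by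
      simp [cp, ee_apply]
    rw [this, hcos, hv0]; ring
  · show y 1 = cp x r (Complex.arg z) 1
    have : (cp x r (Complex.arg z)) 1 = x 1 + r * Real.sin (Complex.arg z) := by
      simp [cp, ee_apply]
    rw [this, hsin, hv1]; ring

lemma phi2_cont : Continuous fun z : (Fin 2 → ℂ) × (Fin 2 → ℂ) => phi2 z.1 z.2 := by
  unfold phi2
  fun_prop

lemma cp_cont (r : ℝ) : Continuous fun w : E2 × ℝ => cp w.1 r w.2 := by
  unfold cp
  apply Continuous.add
  apply Continuous.add continuous_fst
  · exact ((continuous_const.mul (Real.continuous_cos.comp continuous_snd))).smul continuous_const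
  · exact ((continuous_const.mul (Real.continuous_sin.comp continuous_snd))).smul continuous_const

lemma dichotomy {f : E2 → (Fin 2 → ℂ)} (hf : Continuous f) {r : ℝ} (hr : 0 < r)
    {v₁ v₂ : ℂ} (hne : v₁ ≠ v₂)
    (hall : ∀ x y : E2, dist x y = r → phi2 (f x) (f y) = v₁ ∨ phi2 (f x) (f y) = v₂) :
    (∀ x y : E2, dist x y = r → phi2 (f x) (f y) = v₁) ∨
      (∀ x y : E2, dist x y = r → phi2 (f x) (f y) = v₂) := by
  set g : E2 × ℝ → ℂ := fun w => phi2 (f w.1) (f (cp w.1 r w.2)) with hgdef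
  have hg : Continuous g := by
    have hcomp : g = (fun z : (Fin 2 → ℂ) × (Fin 2 → ℂ) => phi2 z.1 z.2) ∘
        (fun w : E2 × ℝ => (f w.1, f (cp w.1 r w.2))) := rfl
    rw [hcomp]
    exact phi2_cont.comp ((hf.comp continuous_fst).prodMk (hf.comp (cp_cont r)))
  have hval : ∀ w, g w = v₁ ∨ g w = v₂ := fun w => hall _ _ (dist_cp _ hr.le _)
  have hT : IsPreconnected (Set.range g) := isPreconnected_range hg
  by_cases hA : ∀ x y : E2, dist x y = r → phi2 (f x) (f y) = v₁
  · exact Or.inl hA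
  push_neg at hA
  obtain ⟨x₀, y₀, hd₀, hv₀⟩ := hA
  right
  intro x y hxy
  rcases hall x y hxy with hcase | hcase
  · exfalso
    -- value v₁ attained at (x,y), value v₂ attained at (x₀,y₀)
    obtain ⟨θ₁, hθ₁⟩ := exists_cp hr hxy
    obtain ⟨θ₂, hθ₂⟩ := exists_cp hr hd₀
    have h1 : v₁ ∈ Set.range g := ⟨(x, θ₁), by rw [hgdef]; simp only; rw [← hθ₁]; exact hcase⟩
    have h2 : v₂ ∈ Set.range g := by
      refine ⟨(x₀, θ₂), ?_⟩
      rw [hgdef]; simp only; rw [← hθ₂]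
      rcases hall x₀ y₀ hd₀ with h | h
      · exact absurd h hv₀
      · exact h
    have := hT {v₂}ᶜ {v₁}ᶜ (isOpen_compl_singleton) (isOpen_compl_singleton)
      (by intro z hz
          rcases hz with ⟨w, rfl⟩
          rcases hval w with h | h
          · left; rw [h]; simp [hne]
          · right; rw [h]; simp [Ne.symm hne])
      ⟨v₁, h1, by simp [hne]⟩ ⟨v₂, h2, by simp [Ne.symm hne]⟩
    obtain ⟨z, hzT, hz2, hz1⟩ := this
    rcases hzT with ⟨w, rfl⟩
    rcases hval w with h | h
    · exact hz1 h
    · exact hz2 h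
  · exact hcase


section Main
variable {f : E2 → (Fin 2 → ℂ)}

local notation "u" => fun x y => phi2 (f x) (f y)

lemma ofReal_sq_ne (a : ℝ) (ha : a ≠ 0) : ((a:ℂ))^2 ≠ 0 := by
  simpa using pow_ne_zero 2 (Complex.ofReal_ne_zero.mpr ha)

/-- M2 -/
theorem pres_sqrt3 (hf : Continuous f) {a : ℝ} (ha : 0 < a) (hPa : Pres f a) :
    Pres f (Real.sqrt 3 * a) := by
  have hs3 : (Real.sqrt 3)^2 = 3 := Real.sq_sqrt (by norm_num)
  have hs3pos : (0:ℝ) < Real.sqrt 3 := Real.sqrt_pos.mpr (by norm_num)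
  set d := Real.sqrt 3 * a with hddef
  have hd : 0 < d := mul_pos hs3pos ha
  have hAne : ((a:ℂ))^2 ≠ 0 := ofReal_sq_ne a (ne_of_gt ha)
  have hcast : ((d:ℝ):ℂ)^2 = 3 * ((a:ℂ))^2 := by
    rw [hddef]
    push_cast
    rw [mul_pow, ← Complex.ofReal_pow, hs3]
    push_cast; ring
  -- pointwise dichotomy of values
  have hpt : ∀ x y : E2, dist x y = d → phi2 (f x) (f y) = 0 ∨
      phi2 (f x) (f y) = 3 * ((a:ℂ))^2 := by
    intro x y h
    set z := fr x y (d/2) (a/2) with hz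
    set w := fr x y (d/2) (-(a/2)) with hw
    have hX : fr x y 0 0 = x := fr_zero x y
    have hY : fr x y d 0 = y := fr_d x y hd h
    have dzw : dist z w = a := by
      rw [hz, hw]; exact dist_fr_eq x y hd h _ _ _ _ ha.le (by ring)
    have dxz : dist x z = a := by
      rw [← hX, hz]
      exact dist_fr_eq x y hd h _ _ _ _ ha.le (by rw [hddef]; nlinarith [hs3])
    have dxw : dist x w = a := by
      rw [← hX, hw]
      exact dist_fr_eq x y hd h _ _ _ _ ha.le (by rw [hddef]; nlinarith [hs3])
    have dzy : dist z y = a := by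
      rw [← hY, hz]
      exact dist_fr_eq x y hd h _ _ _ _ ha.le (by rw [hddef]; nlinarith [hs3])
    have dwy : dist w y = a := by
      rw [← hY, hw]
      exact dist_fr_eq x y hd h _ _ _ _ ha.le (by rw [hddef]; nlinarith [hs3])
    have hcm := cm (f z) (f w) (f x) (f y)
    rw [hPa z w dzw] at hcm
    rw [phi2_comm (f z) (f x), hPa x z dxz] at hcm
    rw [hPa z y dzy] at hcm
    rw [phi2_comm (f w) (f x), hPa x w dxw] at hcm
    rw [hPa w y dwy] at hcm
    have key : (-2 * ((a:ℂ))^2) * (phi2 (f x) (f y) * (phi2 (f x) (f y) - 3*((a:ℂ))^2)) = 0 := by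
      unfold cmdet at hcm
      linear_combination hcm
    have h2A : (-2 : ℂ) * ((a:ℂ))^2 ≠ 0 := by simp [hAne]
    rcases mul_eq_zero.mp key with h' | h'
    · exact absurd (by linear_combination h') h2A
    · rcases mul_eq_zero.mp h' with h'' | h''
      · exact Or.inl h''
      · right; linear_combination h''
  have hne03 : (0:ℂ) ≠ 3 * ((a:ℂ))^2 := fun hcon => hAne (by linear_combination -hcon/3)
  rcases dichotomy hf hd hne03 hpt with hall0 | hall3
  swap
  · intro x y h
    rw [hall3 x y h, hcast]
  -- exclusion of the all-zero case
  exfalso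
  -- step: distance 2a has value (a:C)^2
  have h2a : ∀ x y : E2, dist x y = 2*a → phi2 (f x) (f y) = ((a:ℂ))^2 := by
    intro x y h
    have h2apos : 0 < 2*a := by linarith
    set z := fr x y a 0 with hz
    set w := fr x y (a/2) (d/2) with hw
    have hX : fr x y 0 0 = x := fr_zero x y
    have hY : fr x y (2*a) 0 = y := fr_d x y h2apos h
    have dxz : dist x z = a := by
      rw [← hX, hz]; exact dist_fr_eq x y h2apos h _ _ _ _ ha.le (by ring)
    have dzy : dist z y = a := by
      rw [← hY, hz]; exact dist_fr_eq x y h2apos h _ _ _ _ ha.le (by ring)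
    have dxw : dist x w = a := by
      rw [← hX, hw]
      exact dist_fr_eq x y h2apos h _ _ _ _ ha.le (by rw [hddef]; nlinarith [hs3])
    have dzw : dist z w = a := by
      rw [hz, hw]
      exact dist_fr_eq x y h2apos h _ _ _ _ ha.le (by rw [hddef]; nlinarith [hs3])
    have dwy : dist w y = d := by
      rw [← hY, hw]
      exact dist_fr_eq x y h2apos h _ _ _ _ hd.le (by rw [hddef]; nlinarith [hs3])
    have hcm := cm (f x) (f z) (f w) (f y)
    rw [hPa x z dxz, hPa x w dxw, hPa z w dzw, hPa z y dzy, hall0 w y dwy] at hcm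
    have key : (-2*((a:ℂ))^2) * (phi2 (f x) (f y) - ((a:ℂ))^2)^2 = 0 := by
      unfold cmdet at hcm; linear_combination hcm
    have h2A : (-2 : ℂ) * ((a:ℂ))^2 ≠ 0 := by simp [hAne]
    rcases mul_eq_zero.mp key with h' | h'
    · exact absurd (by linear_combination h') h2A
    · have := pow_eq_zero_iff (n := 2) (by norm_num) |>.mp h'
      linear_combination this
  -- step: distance √2 a satisfies a quadratic equation
  have hq2 : (Real.sqrt 2)^2 = 2 := Real.sq_sqrt (by norm_num)
  have hq2pos : (0:ℝ) < Real.sqrt 2 := Real.sqrt_pos.mpr (by norm_num)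
  have hdq : 0 < Real.sqrt 2 * a := mul_pos hq2pos ha
  have hE3 : ∀ p q : E2, dist p q = Real.sqrt 2 * a →
      (phi2 (f p) (f q))^2 - ((a:ℂ))^2 * (phi2 (f p) (f q)) + ((a:ℂ))^4 = 0 := by
    intro p q h
    set z := fr p q (Real.sqrt 2*a) a with hz
    set z' := fr p q (Real.sqrt 2*a) (-a) with hz'
    have hX : fr p q 0 0 = p := fr_zero p q
    have hY : fr p q (Real.sqrt 2*a) 0 = q := fr_d p q hdq h
    have dzq : dist z q = a := by
      rw [← hY, hz, dist_comm]
      exact dist_fr_eq p q hdq h _ _ _ _ ha.le (by ring)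
    have dz'q : dist z' q = a := by
      rw [← hY, hz', dist_comm]
      exact dist_fr_eq p q hdq h _ _ _ _ ha.le (by ring)
    have dzz' : dist z z' = 2*a := by
      rw [hz, hz']
      exact dist_fr_eq p q hdq h _ _ _ _ (by linarith) (by ring)
    have dpz : dist p z = d := by
      rw [← hX, hz]
      exact dist_fr_eq p q hdq h _ _ _ _ hd.le (by rw [hddef]; nlinarith [hs3, hq2])
    have dpz' : dist p z' = d := by
      rw [← hX, hz']
      exact dist_fr_eq p q hdq h _ _ _ _ hd.le (by rw [hddef]; nlinarith [hs3, hq2])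
    have hcm := cm (f p) (f z) (f z') (f q)
    rw [hall0 p z dpz, hall0 p z' dpz', h2a z z' dzz', hPa z q dzq, hPa z' q dz'q] at hcm
    have key : (-2*((a:ℂ))^2) * ((phi2 (f p) (f q))^2 - ((a:ℂ))^2 * (phi2 (f p) (f q))
        + ((a:ℂ))^4) = 0 := by
      unfold cmdet at hcm; linear_combination hcm
    have h2A : (-2 : ℂ) * ((a:ℂ))^2 ≠ 0 := by simp [hAne]
    rcases mul_eq_zero.mp key with h' | h'
    · exact absurd (by linear_combination h') h2A
    · exact h'
  -- the square configuration on an explicit pair at distance √2 a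
  set p₀ : E2 := 0 with hp₀
  set q₀ : E2 := cp p₀ (Real.sqrt 2*a) 0 with hq₀
  have hpq : dist p₀ q₀ = Real.sqrt 2*a := dist_cp p₀ hdq.le 0
  set z := fr p₀ q₀ (Real.sqrt 2*a/2) (Real.sqrt 2*a/2) with hz
  set z' := fr p₀ q₀ (Real.sqrt 2*a/2) (-(Real.sqrt 2*a/2)) with hz'
  have hX : fr p₀ q₀ 0 0 = p₀ := fr_zero p₀ q₀
  have hY : fr p₀ q₀ (Real.sqrt 2*a) 0 = q₀ := fr_d p₀ q₀ hdq hpq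
  have dpz : dist p₀ z = a := by
    rw [← hX, hz]; exact dist_fr_eq p₀ q₀ hdq hpq _ _ _ _ ha.le (by nlinarith [hq2])
  have dpz' : dist p₀ z' = a := by
    rw [← hX, hz']; exact dist_fr_eq p₀ q₀ hdq hpq _ _ _ _ ha.le (by nlinarith [hq2])
  have dzq : dist z q₀ = a := by
    rw [← hY, hz, dist_comm]
    exact dist_fr_eq p₀ q₀ hdq hpq _ _ _ _ ha.le (by nlinarith [hq2])
  have dz'q : dist z' q₀ = a := by
    rw [← hY, hz', dist_comm]
    exact dist_fr_eq p₀ q₀ hdq hpq _ _ _ _ ha.le (by nlinarith [hq2])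
  have dzz' : dist z z' = Real.sqrt 2*a := by
    rw [hz, hz']; exact dist_fr_eq p₀ q₀ hdq hpq _ _ _ _ hdq.le (by nlinarith [hq2])
  have hqe1 := hE3 p₀ q₀ hpq
  have hqe2 := hE3 z z' dzz'
  have hcm := cm (f p₀) (f z) (f z') (f q₀)
  rw [hPa p₀ z dpz, hPa p₀ z' dpz', hPa z q₀ dzq, hPa z' q₀ dz'q] at hcm
  set c1 := phi2 (f p₀) (f q₀) with hc1
  set c2 := phi2 (f z) (f z') with hc2
  have key : (-2 : ℂ) * (c1 * c2 * (c1 + c2 - 4*((a:ℂ))^2)) = 0 := by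
    unfold cmdet at hcm; linear_combination hcm
  have key' : c1 * c2 * (c1 + c2 - 4*((a:ℂ))^2) = 0 := by
    have h2 : (-2 : ℂ) ≠ 0 := by norm_num
    exact (mul_eq_zero.mp key).resolve_left h2
  rcases mul_eq_zero.mp key' with h' | hsum
  · rcases mul_eq_zero.mp h' with h1 | h2
    · rw [h1] at hqe1
      have h4 : ((a:ℂ))^4 = 0 := by linear_combination hqe1
      exact (pow_ne_zero 2 (Complex.ofReal_ne_zero.mpr (ne_of_gt ha)))
        (by
          have := pow_eq_zero_iff (M₀ := ℂ) (n := 4) (by norm_num) |>.mp h4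
          rw [this]; ring)
    · rw [h2] at hqe2
      have h4 : ((a:ℂ))^4 = 0 := by linear_combination hqe2
      exact (pow_ne_zero 2 (Complex.ofReal_ne_zero.mpr (ne_of_gt ha)))
        (by
          have := pow_eq_zero_iff (M₀ := ℂ) (n := 4) (by norm_num) |>.mp h4
          rw [this]; ring)
  · have hdiff : (c1 - c2) * (c1 + c2 - ((a:ℂ))^2) = 0 := by
      linear_combination hqe1 - hqe2
    rcases mul_eq_zero.mp hdiff with h' | h'
    · have hc1v : c1 = 2*((a:ℂ))^2 := by linear_combination hsum/2 + h'/2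
      rw [hc1v] at hqe1
      have h3A : ((a:ℂ))^4 = 0 := by linear_combination hqe1 / 3
      exact (pow_ne_zero 4 (Complex.ofReal_ne_zero.mpr (ne_of_gt ha))) h3A
    · have : (3:ℂ)*((a:ℂ))^2 = 0 := by linear_combination h' - hsum
      apply hAne
      linear_combination this / 3

/-- M3 : a, √3 a ∈ D → 2a ∈ D -/
theorem pres_two {a : ℝ} (ha : 0 < a) (hPa : Pres f a) (hP3 : Pres f (Real.sqrt 3 * a)) :
    Pres f (2*a) := by
  have hs3 : (Real.sqrt 3)^2 = 3 := Real.sq_sqrt (by norm_num)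
  have hAne : ((a:ℂ))^2 ≠ 0 := ofReal_sq_ne a (ne_of_gt ha)
  have hcast3 : ((Real.sqrt 3 * a : ℝ):ℂ)^2 = 3 * ((a:ℂ))^2 := by
    push_cast
    rw [mul_pow, ← Complex.ofReal_pow, hs3]
    push_cast; ring
  intro x y h
  have h2apos : 0 < 2*a := by linarith
  have hX : fr x y 0 0 = x := fr_zero x y
  have hY : fr x y (2*a) 0 = y := fr_d x y h2apos h
  have hd3 : (0:ℝ) ≤ Real.sqrt 3 * a := by positivity
  -- config 1
  have hroots1 : phi2 (f x) (f y) = ((a:ℂ))^2 ∨ phi2 (f x) (f y) = 4*((a:ℂ))^2 := by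
    set z := fr x y a 0 with hz
    set w := fr x y (a/2) (Real.sqrt 3*a/2) with hw
    have dxz : dist x z = a := by
      rw [← hX, hz]; exact dist_fr_eq x y h2apos h _ _ _ _ ha.le (by ring)
    have dzy : dist z y = a := by
      rw [← hY, hz]; exact dist_fr_eq x y h2apos h _ _ _ _ ha.le (by ring)
    have dxw : dist x w = a := by
      rw [← hX, hw]
      exact dist_fr_eq x y h2apos h _ _ _ _ ha.le (by nlinarith [hs3])
    have dzw : dist z w = a := by
      rw [hz, hw]
      exact dist_fr_eq x y h2apos h _ _ _ _ ha.le (by nlinarith [hs3])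
    have dwy : dist w y = Real.sqrt 3 * a := by
      rw [← hY, hw]
      exact dist_fr_eq x y h2apos h _ _ _ _ hd3 (by nlinarith [hs3])
    have hcm := cm (f x) (f z) (f w) (f y)
    rw [hPa x z dxz, hPa x w dxw, hPa z w dzw, hPa z y dzy, hP3 w y dwy, hcast3] at hcm
    have key : (-2*((a:ℂ))^2) * ((phi2 (f x) (f y) - ((a:ℂ))^2) *
        (phi2 (f x) (f y) - 4*((a:ℂ))^2)) = 0 := by
      unfold cmdet at hcm; linear_combination hcm
    have h2A : (-2 : ℂ) * ((a:ℂ))^2 ≠ 0 := by simp [hAne]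
    rcases mul_eq_zero.mp key with h' | h'
    · exact absurd (by linear_combination h') h2A
    · rcases mul_eq_zero.mp h' with h'' | h''
      · exact Or.inl (by linear_combination h'')
      · exact Or.inr (by linear_combination h'')
  -- config 2
  have hroots2 : phi2 (f x) (f y) = 4*((a:ℂ))^2 ∨ phi2 (f x) (f y) = 7*((a:ℂ))^2 := by
    set p := fr x y (a/2) (Real.sqrt 3*a/2) with hp
    set q := fr x y (3*a/2) (Real.sqrt 3*a/2) with hq
    have dxp : dist x p = a := by
      rw [← hX, hp]; exact dist_fr_eq x y h2apos h _ _ _ _ ha.le (by nlinarith [hs3])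
    have dxq : dist x q = Real.sqrt 3 * a := by
      rw [← hX, hq]; exact dist_fr_eq x y h2apos h _ _ _ _ hd3 (by nlinarith [hs3])
    have dpq : dist p q = a := by
      rw [hp, hq]; exact dist_fr_eq x y h2apos h _ _ _ _ ha.le (by ring)
    have dpy : dist p y = Real.sqrt 3 * a := by
      rw [← hY, hp]; exact dist_fr_eq x y h2apos h _ _ _ _ hd3 (by nlinarith [hs3])
    have dqy : dist q y = a := by
      rw [← hY, hq]; exact dist_fr_eq x y h2apos h _ _ _ _ ha.le (by nlinarith [hs3])
    have hcm := cm (f x) (f p) (f q) (f y)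
    rw [hPa x p dxp, hP3 x q dxq, hPa p q dpq, hP3 p y dpy, hPa q y dqy, hcast3] at hcm
    have key : (-2*((a:ℂ))^2) * ((phi2 (f x) (f y) - 4*((a:ℂ))^2) *
        (phi2 (f x) (f y) - 7*((a:ℂ))^2)) = 0 := by
      unfold cmdet at hcm; linear_combination hcm
    have h2A : (-2 : ℂ) * ((a:ℂ))^2 ≠ 0 := by simp [hAne]
    rcases mul_eq_zero.mp key with h' | h'
    · exact absurd (by linear_combination h') h2A
    · rcases mul_eq_zero.mp h' with h'' | h''
      · exact Or.inl (by linear_combination h'')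
      · exact Or.inr (by linear_combination h'')
  have hval : phi2 (f x) (f y) = 4*((a:ℂ))^2 := by
    rcases hroots1 with h1' | h1'
    · rcases hroots2 with h2' | h2'
      · exact h2'
      · exfalso
        apply hAne
        have : (6:ℂ) * ((a:ℂ))^2 = 0 := by linear_combination h1' - h2'
        linear_combination this/6
    · exact h1'
  rw [hval]
  push_cast
  ring

/-- M4 : the "kill" lemma -/
theorem kill {d d' : ℝ} (hd : 0 < d) (hd'0 : 0 ≤ d')
    (h1 : Pres f 1) (h2 : Pres f 2) (hd' : Pres f d')
    (hd'' : Pres f (Real.sqrt (2*d^2 + 2 - d'^2)))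
    (hlo : (d-1)^2 ≤ d'^2) (hhi : d'^2 ≤ (d+1)^2) : Pres f d := by
  intro p q h
  have hqp : dist q p = d := by rw [dist_comm]; exact h
  set lam := (d'^2 - d^2 - 1)/(2*d) with hlam
  have h2dlam : 2*d*lam = d'^2 - d^2 - 1 := by
    rw [hlam]; field_simp
  have hlam2 : lam^2 ≤ 1 := by
    have hub : d'^2 - d^2 - 1 ≤ 2*d := by nlinarith
    have hlb : -(2*d) ≤ d'^2 - d^2 - 1 := by nlinarith
    have hsq : (2*d*lam)^2 ≤ (2*d)^2 := by rw [h2dlam]; nlinarith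
    nlinarith [hsq, mul_pos hd hd]
  set mu := Real.sqrt (1 - lam^2) with hmu
  have hmu2 : mu^2 = 1 - lam^2 := Real.sq_sqrt (by linarith)
  have harg : (0:ℝ) ≤ 2*d^2 + 2 - d'^2 := by nlinarith
  set dpp := Real.sqrt (2*d^2 + 2 - d'^2) with hdpp
  have hdpp2 : dpp^2 = 2*d^2 + 2 - d'^2 := Real.sq_sqrt harg
  have hX : fr q p 0 0 = q := fr_zero q p
  have hY : fr q p d 0 = p := fr_d q p hd hqp
  set z := fr q p lam mu with hz
  set z' := fr q p (-lam) (-mu) with hz'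
  have dzq : dist z q = 1 := by
    rw [← hX, hz, dist_comm]
    exact dist_fr_eq q p hd hqp _ _ _ _ (by norm_num) (by nlinarith [hmu2])
  have dz'q : dist z' q = 1 := by
    rw [← hX, hz', dist_comm]
    exact dist_fr_eq q p hd hqp _ _ _ _ (by norm_num) (by nlinarith [hmu2])
  have dzz' : dist z z' = 2 := by
    rw [hz, hz']
    exact dist_fr_eq q p hd hqp _ _ _ _ (by norm_num) (by nlinarith [hmu2])
  have dpz' : dist p z' = d' := by
    rw [← hY, hz', dist_comm]
    exact dist_fr_eq q p hd hqp _ _ _ _ hd'0 (by nlinarith [hmu2, h2dlam])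
  have dpz : dist p z = dpp := by
    rw [← hY, hz, dist_comm]
    refine dist_fr_eq q p hd hqp _ _ _ _ (Real.sqrt_nonneg _) ?_
    rw [hdpp2]
    nlinarith [hmu2, h2dlam]
  have hcast1 : ((1:ℝ):ℂ)^2 = 1 := by norm_num
  have hcast2 : ((2:ℝ):ℂ)^2 = 4 := by norm_num
  have hcastB : ((dpp:ℝ):ℂ)^2 = 2*((d:ℂ))^2 + 2 - ((d':ℂ))^2 := by
    rw [← Complex.ofReal_pow, hdpp2]
    push_cast; ring
  have hcm := cm (f p) (f z) (f z') (f q)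
  rw [hd'' p z (by rw [dpz, hdpp]), hd' p z' dpz', h2 z z' dzz', h1 z q dzq, h1 z' q dz'q] at hcm
  rw [hcastB, hcast1, hcast2] at hcm
  have key : (-2:ℂ) * (2*((d:ℂ))^2 - 2*(phi2 (f p) (f q)))^2 = 0 := by
    unfold cmdet at hcm; linear_combination hcm
  have key' : (2*((d:ℂ))^2 - 2*(phi2 (f p) (f q)))^2 = 0 := by
    have h2ne : (-2 : ℂ) ≠ 0 := by norm_num
    exact (mul_eq_zero.mp key).resolve_left h2ne
  have := pow_eq_zero_iff (n := 2) (by norm_num) |>.mp key'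
  linear_combination -this/2

/-- M5 -/
theorem pres_sqrt_nat (hf : Continuous f) (h1 : Pres f 1) :
    ∀ n : ℕ, 1 ≤ n → Pres f (Real.sqrt n) := by
  have hP3 : Pres f (Real.sqrt 3) := by
    have := pres_sqrt3 hf one_pos h1
    rwa [mul_one] at this
  have hP2 : Pres f 2 := by
    have := pres_two one_pos h1 (by rwa [mul_one])
    norm_num at this
    exact this
  intro n
  induction n using Nat.strong_induction_on with
  | _ n ih =>
    intro hn
    by_cases h5 : n ≤ 4
    · -- base cases
      interval_cases n
      · simpa using h1
      · -- n = 2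
        have harg : 2*(Real.sqrt 2)^2 + 2 - (Real.sqrt 3)^2 = 3 := by
          rw [Real.sq_sqrt (by norm_num : (0:ℝ) ≤ 2), Real.sq_sqrt (by norm_num : (0:ℝ) ≤ 3)]
          norm_num
        have h2' : (0:ℝ) ≤ 2 := by norm_num
        have hs2 : (Real.sqrt 2)^2 = 2 := Real.sq_sqrt h2'
        have hs2nn : (0:ℝ) ≤ Real.sqrt 2 := Real.sqrt_nonneg 2
        have hs3 : (Real.sqrt 3)^2 = 3 := Real.sq_sqrt (by norm_num)
        have key := kill (d := Real.sqrt 2) (d' := Real.sqrt 3)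
          (Real.sqrt_pos.mpr (by norm_num)) (Real.sqrt_nonneg 3) h1 hP2 hP3
          (by rw [harg]; exact hP3)
          (by nlinarith [hs2, hs3, hs2nn]) (by nlinarith [hs2, hs3, hs2nn])
        have : ((2:ℕ):ℝ) = 2 := by norm_num
        rw [this]
        exact key
      · have : ((3:ℕ):ℝ) = 3 := by norm_num
        rw [this]; exact hP3
      · have : Real.sqrt ((4:ℕ):ℝ) = 2 := by
          rw [show ((4:ℕ):ℝ) = 2^2 by norm_num, Real.sqrt_sq (by norm_num)]
        rw [this]; exact hP2
    · -- n ≥ 5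
      push_neg at h5
      obtain ⟨j, k, hjk, hj1, hj2, hk1, hk2⟩ :
          ∃ j k : ℕ, j + 3*k = 2*n+2 ∧ n-3 ≤ j ∧ j ≤ n-1 ∧ 1 ≤ k ∧ k ≤ n-1 := by
        rcases (show n % 3 = 0 ∨ n % 3 = 1 ∨ n % 3 = 2 by omega) with h|h|h
        · exact ⟨n-1, n/3+1, by omega, by omega, by omega, by omega, by omega⟩
        · exact ⟨n-3, (n+5)/3, by omega, by omega, by omega, by omega, by omega⟩
        · exact ⟨n-2, (n+4)/3, by omega, by omega, by omega, by omega, by omega⟩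
      have hj : Pres f (Real.sqrt j) := ih j (by omega) (by omega)
      have hk : Pres f (Real.sqrt k) := ih k (by omega) (by omega)
      have hkpos : (0:ℝ) < (k:ℝ) := by
        have : (1:ℝ) ≤ (k:ℝ) := by exact_mod_cast hk1
        linarith
      have h3k : Pres f (Real.sqrt (3*(k:ℝ))) := by
        have := pres_sqrt3 hf (Real.sqrt_pos.mpr hkpos) hk
        rwa [← Real.sqrt_mul (by norm_num : (0:ℝ) ≤ 3)] at this
      have hnR : (0:ℝ) < (n:ℝ) := by
        have : (1:ℝ) ≤ (n:ℝ) := by exact_mod_cast hn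
        linarith
      have hsqn : (Real.sqrt n)^2 = (n:ℝ) := Real.sq_sqrt hnR.le
      have hsqj : (Real.sqrt j)^2 = (j:ℝ) := Real.sq_sqrt (by positivity)
      have hjkR : (j:ℝ) + 3*(k:ℝ) = 2*(n:ℝ) + 2 := by exact_mod_cast hjk
      have harg : 2*(Real.sqrt n)^2 + 2 - (Real.sqrt j)^2 = 3*(k:ℝ) := by
        rw [hsqn, hsqj]; linarith
      have hjlb : (n:ℝ) - 3 ≤ (j:ℝ) := by
        have h1' : ((n-3:ℕ):ℝ) ≤ (j:ℝ) := by exact_mod_cast hj1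
        have h2' : ((n-3:ℕ):ℝ) = (n:ℝ) - 3 := by
          have : (3:ℕ) ≤ n := by omega
          push_cast [this]; ring
        linarith
      have hjub : (j:ℝ) ≤ (n:ℝ) - 1 := by
        have h1' : (j:ℝ) ≤ ((n-1:ℕ):ℝ) := by exact_mod_cast hj2
        have h2' : ((n-1:ℕ):ℝ) = (n:ℝ) - 1 := by
          have : (1:ℕ) ≤ n := by omega
          push_cast [this]; ring
        linarith
      have hsn2 : (2:ℝ) ≤ Real.sqrt n := by
        nlinarith [hsqn, Real.sqrt_nonneg (n:ℝ), (show (5:ℝ) ≤ (n:ℝ) by exact_mod_cast h5)]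
      exact kill (Real.sqrt_pos.mpr hnR) (Real.sqrt_nonneg _) h1 hP2 hj
        (by rw [harg]; exact h3k)
        (by nlinarith [hsqn, hsqj, hsn2])
        (by nlinarith [hsqn, hsqj, Real.sqrt_nonneg (n:ℝ)])

/-- M6 -/
theorem pres_dyadic (hf : Continuous f) (h1 : Pres f 1) :
    ∀ q n : ℕ, 1 ≤ n → Pres f (Real.sqrt (n / 2^q)) := by
  have hP3 : Pres f (Real.sqrt 3) := by
    have := pres_sqrt3 hf one_pos h1
    rwa [mul_one] at this
  have hP2 : Pres f 2 := by
    have := pres_two one_pos h1 (by rwa [mul_one])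
    norm_num at this
    exact this
  intro q
  induction q with
  | zero =>
    intro n hn
    have : ((n:ℝ) / 2^0) = (n:ℝ) := by norm_num
    rw [this]
    exact pres_sqrt_nat hf h1 n hn
  | succ q ih =>
    intro n hn
    by_cases hpar : n % 2 = 0
    · -- even
      obtain ⟨m, hm⟩ : ∃ m, n = 2*m := ⟨n/2, by omega⟩
      have : ((n:ℝ) / 2^(q+1)) = ((m:ℝ) / 2^q) := by
        rw [hm]; push_cast; field_simp; ring
      rw [this]
      exact ih m (by omega)
    · -- odd
      have hodd : n % 2 = 1 := by omega
      set m₁ : ℕ := (n+1)/2 + 2^q with hm₁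
      set m₂ : ℕ := (n-1)/2 + 2^q with hm₂
      have hm₁R : 2*(m₁:ℝ) = (n:ℝ) + 1 + 2^(q+1) := by
        have : 2*m₁ = n + 1 + 2^(q+1) := by
          rw [hm₁]; have := Nat.two_pow_pos q; omega
        exact_mod_cast this
      have hm₂R : 2*(m₂:ℝ) = (n:ℝ) - 1 + 2^(q+1) := by
        have h' : 2*m₂ + 1 = n + 2^(q+1) := by
          rw [hm₂]; have := Nat.two_pow_pos q; omega
        have : (2*(m₂:ℝ)) + 1 = (n:ℝ) + 2^(q+1) := by exact_mod_cast h'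
        linarith
      have hp2pos : (0:ℝ) < 2^(q+1) := by positivity
      have hp2pos' : (0:ℝ) < 2^q := by positivity
      have hnR : (1:ℝ) ≤ (n:ℝ) := by exact_mod_cast hn
      have hargn : (0:ℝ) ≤ (n:ℝ)/2^(q+1) := by positivity
      set d := Real.sqrt ((n:ℝ)/2^(q+1)) with hd
      set d' := Real.sqrt ((m₁:ℝ)/2^q) with hd'
      have hd2 : d^2 = (n:ℝ)/2^(q+1) := Real.sq_sqrt hargn
      have hd'2 : d'^2 = (m₁:ℝ)/2^q := Real.sq_sqrt (by positivity)
      have hdpos : 0 < d := Real.sqrt_pos.mpr (by positivity)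
      have hm12 : (m₁:ℝ)/2^q = (n:ℝ)/2^(q+1) + 1 + 1/2^(q+1) := by
        field_simp
        linear_combination ((2:ℝ)^q) * hm₁R
      have hm22 : (m₂:ℝ)/2^q = (n:ℝ)/2^(q+1) + 1 - 1/2^(q+1) := by
        field_simp
        linear_combination ((2:ℝ)^q) * hm₂R
      have harg : 2*d^2 + 2 - d'^2 = (m₂:ℝ)/2^q := by
        rw [hd2, hd'2, hm12, hm22]
        ring
      have hd'' : Pres f (Real.sqrt (2*d^2 + 2 - d'^2)) := by
        rw [harg]
        exact ih m₂ (by rw [hm₂]; have := Nat.two_pow_pos q; omega)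
      have heps : d'^2 = d^2 + 1 + 1/2^(q+1) := by rw [hd2, hd'2, hm12]
      have hepsle : (1:ℝ)/2^(q+1) ≤ 2*d := by
        have hle1 : (1:ℝ)/2^(q+1) ≤ 1 := by
          rw [div_le_one hp2pos]
          exact one_le_pow₀ (by norm_num)
        have h1' : (1:ℝ)/2^(q+1) ≤ Real.sqrt ((1:ℝ)/2^(q+1)) := by
          rw [Real.le_sqrt (by positivity) (by positivity)]
          nlinarith [mul_nonneg (by positivity : (0:ℝ) ≤ 1/2^(q+1)) (sub_nonneg.mpr hle1)]
        have h2' : Real.sqrt ((1:ℝ)/2^(q+1)) ≤ d := by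
          apply Real.sqrt_le_sqrt
          gcongr
        linarith [hdpos.le]
      exact kill hdpos (Real.sqrt_nonneg _) h1 hP2 (ih m₁ (by have := Nat.two_pow_pos q; omega)) hd''
        (by nlinarith [heps, hdpos.le, one_div_pos.mpr hp2pos])
        (by nlinarith [heps, hepsle])


/-- M7 : all positive distances -/
theorem pres_all (hf : Continuous f) (h1 : Pres f 1) {d : ℝ} (hd : 0 < d) : Pres f d := by
  intro x y h
  set nk : ℕ → ℕ := fun k => Nat.ceil (d^2 * 2^k) with hnk
  have hnk1 : ∀ k, 1 ≤ nk k := by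
    intro k
    rw [hnk]
    exact Nat.one_le_ceil_iff.mpr (by positivity)
  set dk : ℕ → ℝ := fun k => Real.sqrt ((nk k : ℝ) / 2^k) with hdk
  have hdknn : ∀ k, 0 ≤ dk k := fun k => Real.sqrt_nonneg _
  have hPk : ∀ k, Pres f (dk k) := fun k => pres_dyadic hf h1 k (nk k) (hnk1 k)
  -- dk → d
  have hlow : ∀ k, d^2 ≤ (nk k : ℝ)/2^k := by
    intro k
    rw [le_div_iff₀ (by positivity)]
    exact Nat.le_ceil _
  have hhigh : ∀ k, (nk k : ℝ)/2^k ≤ d^2 + 1/2^k := by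
    intro k
    rw [div_le_iff₀ (by positivity)]
    have := (Nat.ceil_lt_add_one (by positivity : (0:ℝ) ≤ d^2 * 2^k)).le
    calc (nk k : ℝ) ≤ d^2*2^k + 1 := this
    _ = (d^2 + 1/2^k)*2^k := by field_simp
  have htend : Filter.Tendsto (fun k => (nk k : ℝ)/2^k) Filter.atTop (nhds (d^2)) := by
    have h0 : Filter.Tendsto (fun k : ℕ => d^2 + 1/2^k) Filter.atTop (nhds (d^2 + 0)) := by
      apply Filter.Tendsto.add tendsto_const_nhds
      have : (fun k : ℕ => (1:ℝ)/2^k) = fun k : ℕ => ((1:ℝ)/2)^k := by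
        funext k; rw [div_pow]; norm_num
      rw [this]
      exact tendsto_pow_atTop_nhds_zero_of_lt_one (by norm_num) (by norm_num)
    rw [add_zero] at h0
    exact tendsto_of_tendsto_of_tendsto_of_le_of_le tendsto_const_nhds h0 hlow hhigh
  have hdtend : Filter.Tendsto dk Filter.atTop (nhds d) := by
    have := (Real.continuous_sqrt.tendsto (d^2)).comp htend
    rwa [Real.sqrt_sq hd.le] at this
  -- the moving point
  set yk : ℕ → E2 := fun k => x + ((dk k)/d) • (y - x) with hyk
  have hdyk : ∀ k, dist x (yk k) = dk k := by
    intro k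
    rw [hyk]
    simp only
    rw [dist_comm, dist_eq_norm, add_sub_cancel_left, norm_smul]
    have hxy : ‖y - x‖ = d := by rw [← dist_eq_norm, dist_comm]; exact h
    rw [hxy, Real.norm_eq_abs, abs_of_nonneg (by positivity)]
    field_simp
  have hyktend : Filter.Tendsto yk Filter.atTop (nhds y) := by
    have h1' : Filter.Tendsto (fun k => (dk k)/d) Filter.atTop (nhds 1) := by
      have := hdtend.div_const d
      rwa [div_self (ne_of_gt hd)] at this
    have h2' : Filter.Tendsto (fun k => ((dk k)/d) • (y - x)) Filter.atTop
        (nhds ((1:ℝ) • (y - x))) := h1'.smul_const _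
    rw [one_smul] at h2'
    have := (tendsto_const_nhds (x := x) (f := Filter.atTop (α := ℕ))).add h2'
    rwa [add_sub_cancel] at this
  -- limits of values
  have hval : ∀ k, phi2 (f x) (f (yk k)) = ((dk k : ℝ) : ℂ)^2 := fun k =>
    hPk k x (yk k) (hdyk k)
  have hL : Filter.Tendsto (fun k => phi2 (f x) (f (yk k))) Filter.atTop
      (nhds (phi2 (f x) (f y))) := by
    have hgc : Continuous fun z : E2 => phi2 (f x) (f z) := by
      have : (fun z : E2 => phi2 (f x) (f z)) =
          (fun w : (Fin 2 → ℂ) × (Fin 2 → ℂ) => phi2 w.1 w.2) ∘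
            (fun z : E2 => (f x, f z)) := rfl
      rw [this]
      exact phi2_cont.comp (continuous_const.prodMk hf)
    exact (hgc.tendsto y).comp hyktend
  have hR : Filter.Tendsto (fun k => ((dk k : ℝ) : ℂ)^2) Filter.atTop
      (nhds (((d:ℝ):ℂ)^2)) := by
    have h1' : Filter.Tendsto (fun k => ((dk k : ℝ) : ℂ)) Filter.atTop (nhds ((d:ℝ):ℂ)) :=
      (Complex.continuous_ofReal.tendsto d).comp hdtend
    exact h1'.pow 2
  have : Filter.Tendsto (fun k => phi2 (f x) (f (yk k))) Filter.atTop
      (nhds (((d:ℝ):ℂ)^2)) := by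
    have : (fun k => phi2 (f x) (f (yk k))) = fun k => ((dk k : ℝ) : ℂ)^2 := funext hval
    rw [this]
    exact hR
  exact tendsto_nhds_unique hL this

end Main
end BQ2

theorem continuous_unit_preserving_preserves_all_distances
    (f : EuclideanSpace ℝ (Fin 2) → (Fin 2 → ℂ)) (hf : Continuous f)
    (h1 : ∀ x y : EuclideanSpace ℝ (Fin 2), dist x y = 1 → phi2 (f x) (f y) = 1) :
    ∀ d : ℝ, 0 ≤ d → ∀ x y : EuclideanSpace ℝ (Fin 2), dist x y = d →
      phi2 (f x) (f y) = (d : ℂ) ^ 2 := by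
  intro d hd x y hxy
  rcases eq_or_lt_of_le hd with heq | hpos
  · have hx : x = y := by
      rw [← heq] at hxy
      exact dist_eq_zero.mp hxy
    rw [hx, BQ2.phi2_self, ← heq]
    norm_num
  · have h1' : BQ2.Pres f 1 := by
      intro a b hab
      rw [h1 a b hab]
      norm_num
    exact BQ2.pres_all hf h1' hpos x y hxy
end
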